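/- Define the concurrence estimate C_est(α) = [S(α) − 2α]/(2√(1+α²) − 2α), where S(α) = α(cosθ₂ + cosθ₃) + sin2δ sinθ₁(sinθ₂ − sinθ₃) + cosθ₁(cosθ₂ − cosθ₃). If sin2δ sinθ₁(sinθ₂ − sinθ₃) + cosθ₂(√2+1+cosθ₁) + cosθ₃(√2+1−cosθ₁) > 2(1+√2), then C_est(1) > 0 and the derivative dC_est/dα at α = 1 is strictly positive; hence there exists α > 1 with C_est(α) > C_est(1). -/

import Mathlib

open Real Topology Filter

/-- If the pure-state parameters satisfy the stated condition, the device-independent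
concurrence estimate `C_est(α) = (S(α) − 2α)/(2√(1+α²) − 2α)` is positive at `α = 1`,
has strictly positive derivative there, and hence improves for some `α > 1`. -/
theorem pure_state_better_alpha (δ θ1 θ2 θ3 : ℝ)
    (Sf : ℝ → ℝ)
    (hSf : Sf = fun α => α * (cos θ2 + cos θ3)
      + sin (2 * δ) * sin θ1 * (sin θ2 - sin θ3) + cos θ1 * (cos θ2 - cos θ3))
    (Cest : ℝ → ℝ)
    (hC : Cest = fun α => (Sf α - 2 * α) / (2 * Real.sqrt (1 + α ^ 2) - 2 * α))
    (hcond : sin (2 * δ) * sin θ1 * (sin θ2 - sin θ3)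
      + cos θ2 * (Real.sqrt 2 + 1 + cos θ1) + cos θ3 * (Real.sqrt 2 + 1 - cos θ1)
      > 2 * (1 + Real.sqrt 2)) :
    Cest 1 > 0 ∧ deriv Cest 1 > 0 ∧ ∃ α > (1 : ℝ), Cest α > Cest 1 := by
  have hs2sq : Real.sqrt 2 ^ 2 = 2 := Real.sq_sqrt (by norm_num)
  set s2 := Real.sqrt 2 with hs2
  have hs2pos : (1:ℝ) < s2 := by nlinarith [Real.sqrt_nonneg 2]
  set A := cos θ2 + cos θ3 with hA
  set B := sin (2 * δ) * sin θ1 * (sin θ2 - sin θ3) + cos θ1 * (cos θ2 - cos θ3) with hB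
  have hcond' : B + (s2 + 1) * (A - 2) > 0 := by
    simp only [hA, hB]; nlinarith [hcond]
  have hA2 : A ≤ 2 := by
    have := Real.cos_le_one θ2; have := Real.cos_le_one θ3
    simp only [hA]; linarith
  have hCfun : Cest = fun α => (α * A + B - 2 * α) / (2 * Real.sqrt (1 + α ^ 2) - 2 * α) := by
    rw [hC, hSf]; funext α; simp only [hB]; ring_nf
  have h11 : Real.sqrt (1 + 1 ^ 2) = s2 := by
    rw [show (1:ℝ) + 1 ^ 2 = 2 by norm_num, hs2]
  have hden1 : 2 * Real.sqrt (1 + (1:ℝ) ^ 2) - 2 * 1 = 2 * s2 - 2 := by rw [h11]; ring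
  have hdenpos : (0:ℝ) < 2 * s2 - 2 := by linarith
  -- value at 1
  have hC1val : Cest 1 = (A + B - 2) / (2 * s2 - 2) := by
    rw [hCfun]; simp only []; rw [hden1]; ring_nf
  have hnum1pos : (0:ℝ) < A + B - 2 := by nlinarith [hcond', hA2, hs2pos]
  have hCest1 : Cest 1 > 0 := by rw [hC1val]; exact div_pos hnum1pos hdenpos
  -- derivative
  have hsq : HasDerivAt (fun α : ℝ => Real.sqrt (1 + α ^ 2)) (1 / s2) 1 := by
    have h1 : HasDerivAt (fun α : ℝ => 1 + α ^ 2) 2 1 := by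
      simpa using ((hasDerivAt_pow 2 (1:ℝ)).const_add 1)
    have h2 := (Real.hasDerivAt_sqrt (by norm_num : (1:ℝ) + 1 ^ 2 ≠ 0)).comp 1 h1
    refine h2.congr_deriv ?_
    have hs2ne : s2 ≠ 0 := by linarith
    rw [h11]
    field_simp
  have hden : HasDerivAt (fun α : ℝ => 2 * Real.sqrt (1 + α ^ 2) - 2 * α) (s2 - 2) 1 := by
    have h := (hsq.const_mul 2).sub ((hasDerivAt_id 1).const_mul 2)
    refine h.congr_deriv ?_
    have hs2ne : s2 ≠ 0 := by linarith
    field_simp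
    nlinarith [hs2sq]
  have hnum : HasDerivAt (fun α : ℝ => α * A + B - 2 * α) (A - 2) 1 := by
    have h := (((hasDerivAt_id (1:ℝ)).mul_const A).add_const B).sub ((hasDerivAt_id 1).const_mul 2)
    refine h.congr_deriv ?_
    ring
  have hne : 2 * Real.sqrt (1 + (1:ℝ) ^ 2) - 2 * 1 ≠ 0 := by rw [hden1]; linarith
  have hD := hnum.div hden hne
  simp only [Pi.div_def] at hD
  rw [← hCfun] at hD
  have hDval : ((A - 2) * (2 * Real.sqrt (1 + (1:ℝ) ^ 2) - 2 * 1) - ((1:ℝ) * A + B - 2 * 1) * (s2 - 2)) / (2 * Real.sqrt (1 + (1:ℝ) ^ 2) - 2 * 1) ^ 2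
      = ((A - 2) * (2 * s2 - 2) - (A + B - 2) * (s2 - 2)) / (2 * s2 - 2) ^ 2 := by
    rw [hden1]; ring_nf
  have hkey : (A - 2) * (2 * s2 - 2) - (A + B - 2) * (s2 - 2)
      = s2 * (s2 - 1) * (B + (s2 + 1) * (A - 2)) := by
    linear_combination (-(s2 * (A - 2) + B)) * hs2sq
  have hDpos : 0 < ((A - 2) * (2 * Real.sqrt (1 + (1:ℝ) ^ 2) - 2 * 1) - ((1:ℝ) * A + B - 2 * 1) * (s2 - 2)) / (2 * Real.sqrt (1 + (1:ℝ) ^ 2) - 2 * 1) ^ 2 := by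
    rw [hDval, hkey]
    apply div_pos
    · apply mul_pos (mul_pos (by linarith) (by linarith)) hcond'
    · positivity
  have hderiv : deriv Cest 1 > 0 := by rw [hD.deriv]; exact hDpos
  refine ⟨hCest1, hderiv, ?_⟩
  -- existence of better α
  have hslope := hasDerivAt_iff_tendsto_slope.mp hD
  have hmono : 𝓝[>] (1:ℝ) ≤ 𝓝[≠] (1:ℝ) :=
    nhdsWithin_mono 1 (fun x hx => ne_of_gt hx)
  have hslope' : Filter.Tendsto (slope Cest 1) (𝓝[>] (1:ℝ)) (𝓝 _) := hslope.mono_left hmono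
  have hev : ∀ᶠ α in 𝓝[>] (1:ℝ), 0 < slope Cest 1 α :=
    hslope'.eventually (eventually_gt_nhds hDpos)
  have hev2 : ∀ᶠ α in 𝓝[>] (1:ℝ), α ∈ Set.Ioi (1:ℝ) := self_mem_nhdsWithin
  obtain ⟨α, hα1, hα2⟩ := (hev.and hev2).exists
  refine ⟨α, hα2, ?_⟩
  rw [slope_def_field] at hα1
  have hαgt : (0:ℝ) < α - 1 := sub_pos.mpr hα2
  have := mul_pos hα1 hαgt
  rw [div_mul_cancel₀ _ (ne_of_gt hαgt)] at this
  linarith
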